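/- For any even n ≥ 4, the count of primes p with 2 < p ≤ n and p + 2 prime satisfies D_t(n) ≥ π(n) − π(√(n+2)) − Σ_{p odd prime, p ≤ √(n+2)} #{q prime ≤ n : q ≡ −2 (mod p)}. -/

import Mathlib

open scoped Classical

open Nat

lemma stmt_8_aux (n s q : ℕ) (hq : q.Prime) (hlt : s < q) (hqn : q ≤ n)
    (hs : s = Nat.sqrt (n + 2)) (h2s : 2 ≤ s) :
    (2 < q ∧ q.Prime ∧ (q + 2).Prime) ∨
      ∃ p, p.Prime ∧ Odd p ∧ p ≤ s ∧ q ≡ p - 2 [MOD p] := by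
  by_cases hp2 : (q + 2).Prime
  · exact Or.inl ⟨by omega, hq, hp2⟩
  · right
    set p := (q + 2).minFac with hpdef
    have hpp : p.Prime := Nat.minFac_prime (by omega)
    have hd : p ∣ q + 2 := Nat.minFac_dvd _
    have hsq : p ^ 2 ≤ q + 2 := Nat.minFac_sq_le_self (by omega) hp2
    have hps : p ≤ s := by
      rw [hs]
      exact Nat.le_sqrt.mpr (by nlinarith)
    have hqodd : Odd q := hq.odd_of_ne_two (by omega)
    have hpne2 : p ≠ 2 := by
      intro h
      have : (2 : ℕ) ∣ q + 2 := h ▸ hd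
      have : Even q := by
        rcases this with ⟨k, hk⟩
        exact ⟨k - 1, by omega⟩
      exact (Nat.not_even_iff_odd.mpr hqodd) this
    have hpodd : Odd p := hpp.odd_of_ne_two hpne2
    have hp3 : 3 ≤ p := by
      have := hpp.two_le; omega
    refine ⟨p, hpp, hpodd, hps, ?_⟩
    have h1 : q + 2 ≡ (p - 2) + 2 [MOD p] := by
      have h2 : (p - 2) + 2 = p := by omega
      rw [h2]
      exact ((Nat.modEq_zero_iff_dvd).mpr hd).trans
        ((Nat.modEq_zero_iff_dvd).mpr dvd_rfl).symm
    exact Nat.ModEq.add_right_cancel' 2 h1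

theorem stmt_8 (n : ℕ) (hn : 4 ≤ n) (he : Even n) :
    ((((Finset.range (n + 1)).filter
        (fun p => 2 < p ∧ p.Prime ∧ (p + 2).Prime)).card : ℤ)) ≥
      (Nat.primeCounting n : ℤ) - (Nat.primeCounting (Nat.sqrt (n + 2)) : ℤ) -
        ∑ p ∈ (Finset.range (Nat.sqrt (n + 2) + 1)).filter (fun p => p.Prime ∧ Odd p),
          (((Finset.range (n + 1)).filter
            (fun q => q.Prime ∧ q ≡ p - 2 [MOD p])).card : ℤ) := by
  set s := Nat.sqrt (n + 2) with hs
  have h2s : 2 ≤ s := Nat.le_sqrt.mpr (by omega)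
  have hss : s * s ≤ n + 2 := Nat.sqrt_le (n + 2)
  have hsn : s ≤ n := by nlinarith
  set T := (Finset.range (n + 1)).filter (fun p => 2 < p ∧ p.Prime ∧ (p + 2).Prime) with hT
  set P := (Finset.range (s + 1)).filter (fun p => p.Prime ∧ Odd p) with hP
  set A := fun p => (Finset.range (n + 1)).filter (fun q => q.Prime ∧ q ≡ p - 2 [MOD p]) with hA
  set S := (Finset.range (n + 1)).filter (fun q => q.Prime ∧ s < q) with hS
  -- S ⊆ T ∪ biUnion
  have hsub : S ⊆ T ∪ P.biUnion A := by
    intro q hqmem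
    simp only [hS, Finset.mem_filter, Finset.mem_range] at hqmem
    obtain ⟨hqn, hq, hlt⟩ := hqmem
    rcases stmt_8_aux n s q hq hlt (by omega) hs h2s with h | ⟨p, hpp, hpo, hps, hmod⟩
    · exact Finset.mem_union_left _ (by simp [hT, Finset.mem_filter, hqn, h])
    · refine Finset.mem_union_right _ (Finset.mem_biUnion.mpr ⟨p, ?_, ?_⟩)
      · simp [hP, Finset.mem_filter, Finset.mem_range]; exact ⟨by omega, hpp, hpo⟩
      · simp [hA, Finset.mem_filter, Finset.mem_range]; exact ⟨by omega, hq, hmod⟩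
  have hcard : S.card ≤ T.card + ∑ p ∈ P, (A p).card :=
    le_trans (Finset.card_le_card hsub)
      (le_trans (Finset.card_union_le _ _)
        (by gcongr; exact Finset.card_biUnion_le))
  -- prime counting
  have hπ : ∀ m : ℕ, Nat.primeCounting m = ((Finset.range (m + 1)).filter Nat.Prime).card := by
    intro m
    rw [Nat.primeCounting, Nat.primeCounting', Nat.count_eq_card_filter_range]
  have hsplit : Nat.primeCounting n = Nat.primeCounting s + S.card := by
    rw [hπ n, hπ s]
    have : (Finset.range (n + 1)).filter Nat.Prime
        = ((Finset.range (s + 1)).filter Nat.Prime) ∪ S := by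
      ext q
      simp only [hS, Finset.mem_union, Finset.mem_filter, Finset.mem_range]
      constructor
      · rintro ⟨h1, h2⟩
        by_cases h : q ≤ s
        · exact Or.inl ⟨by omega, h2⟩
        · exact Or.inr ⟨h1, h2, by omega⟩
      · rintro (⟨h1, h2⟩ | ⟨h1, h2, h3⟩)
        · exact ⟨by omega, h2⟩
        · exact ⟨h1, h2⟩
    rw [this, Finset.card_union_of_disjoint]
    rw [Finset.disjoint_left]
    intro q h1 h2
    simp only [hS, Finset.mem_filter, Finset.mem_range] at h1 h2
    omega
  have hcast : ∑ p ∈ P, ((A p).card : ℤ) = ((∑ p ∈ P, (A p).card : ℕ) : ℤ) := by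
    push_cast; ring
  rw [ge_iff_le]
  have key : (S.card : ℤ) ≤ (T.card : ℤ) + ∑ p ∈ P, ((A p).card : ℤ) := by
    push_cast
    exact_mod_cast hcard
  push_cast [hsplit]
  simp only [hA] at key
  linarith [key]
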